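/- Let F be a free group with free generating set X and let d be a positive integer divisible by 4. Let R be the set of reduced words of length d/4 over X ∪ X⁻¹, and for w ∈ R let rev(w) denote the reversed word. Then D = { w·rev(w) : w ∈ R } is a distinct difference configuration in F of diameter at most d. -/

import Mathlib

/-- A subset `D` of a group is a distinct difference configuration. -/
def IsDDC {G : Type*} [Group G] (D : Set G) : Prop :=
  ∀ g ∈ D, ∀ h ∈ D, ∀ g' ∈ D, ∀ h' ∈ D,
    g ≠ h → g' ≠ h' → g⁻¹ * h = g'⁻¹ * h' → g = g' ∧ h = h'

/-- Reversal of a free group element: the free group element represented by the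
reverse of the reduced word of `w`. -/
def FreeGroup.rev {α : Type*} [DecidableEq α] (w : FreeGroup α) : FreeGroup α :=
  FreeGroup.mk w.toWord.reverse

namespace DDCAux

open List

variable {α : Type*} [DecidableEq α]

/-- The non-cancelling relation on letters. -/
def NC (x y : α × Bool) : Prop := ¬(x.1 = y.1 ∧ x.2 = !y.2)

/-- Inversion of a single letter. -/
def linv (z : α × Bool) : α × Bool := (z.1, !z.2)

lemma linv_invol : Function.Involutive (linv (α := α)) := by
  intro z; cases z with | mk a b => simp [linv]

lemma nc_refl (x : α × Bool) : NC x x := by simp [NC]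

lemma nc_symm {x y : α × Bool} (h : NC x y) : NC y x := by
  simp only [NC] at *
  rintro ⟨h1, h2⟩
  refine h ⟨h1.symm, ?_⟩
  cases hx : x.2 <;> cases hy : y.2 <;> simp_all

lemma nc_linv {x y : α × Bool} (h : NC x y) : NC (linv x) (linv y) := by
  simp only [NC, linv] at *
  rintro ⟨h1, h2⟩
  refine h ⟨h1, ?_⟩
  cases hx : x.2 <;> cases hy : y.2 <;> simp_all

lemma nc_of_ne {x y : α × Bool} (h : x ≠ y) : NC (linv x) y := by
  simp only [NC, linv]
  rintro ⟨h1, h2⟩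
  apply h
  apply Prod.ext h1
  cases hx : x.2 <;> cases hy : y.2 <;> simp_all

lemma chain'_reduce (L : List (α × Bool)) : List.Chain' NC (FreeGroup.reduce L) := by
  induction L with
  | nil => exact List.isChain_nil
  | cons x L ih =>
    rw [FreeGroup.reduce.cons]
    rcases h : FreeGroup.reduce L with _ | ⟨hd, tl⟩
    · exact List.isChain_singleton _
    · rw [h] at ih
      dsimp only
      split_ifs with hc
      · exact ih.tail
      · refine ih.cons ?_
        intro y hy
        simp only [head?_cons, Option.mem_def, Option.some.injEq] at hy
        subst hy
        exact hc

lemma reduce_eq_self {L : List (α × Bool)} (h : List.Chain' NC L) :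
    FreeGroup.reduce L = L := by
  induction L with
  | nil => simp
  | cons x L ih =>
    rw [FreeGroup.reduce.cons, ih h.tail]
    cases L with
    | nil => rfl
    | cons hd tl =>
      dsimp only
      rw [if_neg]
      exact (List.isChain_cons_cons.mp h).1

lemma chain'_toWord (x : FreeGroup α) : List.Chain' NC x.toWord := by
  rw [← FreeGroup.reduce_toWord]
  exact chain'_reduce _

lemma chain'_rev {L : List (α × Bool)} (h : List.Chain' NC L) :
    List.Chain' NC L.reverse := by
  rw [List.Chain', List.isChain_reverse]
  exact h.imp fun a b hab => nc_symm hab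

lemma chain'_map_linv {L : List (α × Bool)} (h : List.Chain' NC L) :
    List.Chain' NC (L.map linv) :=
  List.isChain_map_of_isChain linv (fun _ _ => nc_linv) h

/-- Appending the reverse of a (nonempty) suffix keeps a word reduced. -/
lemma chain'_append_rev (p t : List (α × Bool)) (ht : t ≠ [])
    (h : List.Chain' NC (p ++ t)) : List.Chain' NC ((p ++ t) ++ t.reverse) := by
  rw [List.Chain', List.isChain_append]
  refine ⟨h, chain'_rev (h.suffix ⟨p, rfl⟩), ?_⟩
  intro x hx y hy
  rw [List.head?_reverse] at hy
  rw [List.getLast?_append_of_ne_nil _ ht] at hx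
  simp only [Option.mem_def] at hx hy
  rw [hx] at hy
  cases hy
  exact nc_refl x

/-- Two distinct lists of the same length split along their longest common prefix. -/
lemma exists_prefix {β : Type*} : ∀ (a b : List β), a.length = b.length → a ≠ b →
    ∃ p x y s t, a = p ++ x :: s ∧ b = p ++ y :: t ∧ x ≠ y ∧ s.length = t.length
  | [], [], _, h => absurd rfl h
  | [], _ :: _, h, _ => by simp at h
  | _ :: _, [], h, _ => by simp at h
  | a :: as, b :: bs, h, hne => by
    by_cases hab : a = b
    · subst hab
      have hne' : as ≠ bs := fun e => hne (by rw [e])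
      obtain ⟨p, x, y, s, t, h1, h2, h3, h4⟩ :=
        exists_prefix as bs (by simpa using h) hne'
      exact ⟨a :: p, x, y, s, t, by simp [h1], by simp [h2], h3, h4⟩
    · exact ⟨[], a, b, as, bs, rfl, rfl, hab, by simpa using h⟩

lemma norm_def (w : FreeGroup α) : w.norm = w.toWord.length := rfl

lemma mk_eq (w : FreeGroup α) : w = FreeGroup.mk w.toWord := FreeGroup.mk_toWord.symm

lemma invRev_reverse (L : List (α × Bool)) :
    FreeGroup.invRev L.reverse = L.map linv := by
  simp [FreeGroup.invRev, List.map_reverse, linv]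

lemma invRev_eq (L : List (α × Bool)) :
    FreeGroup.invRev L = (L.map linv).reverse := by
  simp [FreeGroup.invRev, linv]

/-- The key computation: the reduced word of `(w ⬝ rev w)⁻¹ ⬝ (v ⬝ rev v)`. -/
lemma key (w v : FreeGroup α) (p : List (α × Bool)) (x y : α × Bool)
    (s t : List (α × Bool))
    (hw : w.toWord = p ++ x :: s) (hv : v.toWord = p ++ y :: t) (hxy : x ≠ y) :
    ((w * w.rev)⁻¹ * (v * v.rev)).toWord =
      ((p ++ x :: s).map linv ++ ((x :: s).map linv).reverse) ++
        ((y :: t) ++ (p ++ y :: t).reverse) := by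
  have hgrp : (w * w.rev)⁻¹ * (v * v.rev) =
      FreeGroup.mk (((p ++ x :: s).map linv ++ ((x :: s).map linv).reverse) ++
        ((y :: t) ++ (p ++ y :: t).reverse)) := by
    have hw' : w = FreeGroup.mk p * FreeGroup.mk (x :: s) := by
      rw [mk_eq w, hw, ← FreeGroup.mul_mk]
    have hv' : v = FreeGroup.mk p * FreeGroup.mk (y :: t) := by
      rw [mk_eq v, hv, ← FreeGroup.mul_mk]
    have hwr : w.rev = FreeGroup.mk ((p ++ x :: s).reverse) := by
      rw [FreeGroup.rev, hw]
    have hvr : v.rev = FreeGroup.mk ((p ++ y :: t).reverse) := by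
      rw [FreeGroup.rev, hv]
    have e1 : (w * w.rev)⁻¹ * (v * v.rev) = w.rev⁻¹ * (w⁻¹ * v) * v.rev := by
      group
    rw [e1, hwr, hvr, hw', hv']
    have e2 : (FreeGroup.mk p * FreeGroup.mk (x :: s))⁻¹ *
        (FreeGroup.mk p * FreeGroup.mk (y :: t)) =
        FreeGroup.mk (((x :: s).map linv).reverse ++ (y :: t)) := by
      rw [← FreeGroup.mul_mk, ← invRev_eq, ← FreeGroup.inv_mk]
      group
    rw [e2, FreeGroup.inv_mk, invRev_reverse, FreeGroup.mul_mk, FreeGroup.mul_mk]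
    simp [List.append_assoc]
  rw [hgrp, FreeGroup.toWord_mk]
  apply reduce_eq_self
  rw [List.Chain', List.isChain_append]
  refine ⟨?_, ?_, ?_⟩
  · -- left part: (map linv (p ++ x::s)) ++ reverse (map linv (x::s))
    have : (p ++ x :: s).map linv = p.map linv ++ (x :: s).map linv := by
      simp
    rw [this]
    exact chain'_append_rev _ _ (by simp) (by rw [← this]; exact
      (chain'_map_linv (by rw [← hw]; exact chain'_toWord w)))
  · -- right part: (y::t) ++ reverse (p ++ y::t)
    have h1 : List.Chain' NC ((p ++ y :: t) ++ (y :: t).reverse) :=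
      chain'_append_rev _ _ (by simp) (by rw [← hv]; exact chain'_toWord v)
    have h2 := chain'_rev h1
    simpa [List.Chain'] using h2
  · -- junction
    intro a ha b hb
    rw [List.getLast?_append_of_ne_nil _ (by simp), List.getLast?_reverse] at ha
    simp only [List.head?_map, List.head?_cons, Option.map_some, Option.mem_def,
      Option.some.injEq] at ha
    simp only [List.cons_append, List.head?_cons, Option.mem_def,
      Option.some.injEq] at hb
    subst ha; subst hb
    exact nc_of_ne hxy

/-- Recovery lemma: from `g⁻¹h` one can read off `w` and `v`, plus the norm bound. -/
lemma recover (n : ℕ) (g h : FreeGroup α) (w v : FreeGroup α)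
    (hw : w.norm = n) (hv : v.norm = n)
    (hg : g = w * w.rev) (hh : h = v * v.rev) (hne : g ≠ h) :
    (g⁻¹ * h).toWord.take n = w.toWord.map linv ∧
      (g⁻¹ * h).toWord.reverse.take n = v.toWord ∧
      (g⁻¹ * h).norm ≤ 4 * n := by
  have hwv : w ≠ v := by
    rintro rfl
    exact hne (hg.trans hh.symm)
  have hab : w.toWord ≠ v.toWord := fun e => hwv (FreeGroup.toWord_injective e)
  have hlen : w.toWord.length = v.toWord.length := by
    rw [← norm_def, ← norm_def, hw, hv]
  obtain ⟨p, x, y, s, t, h1, h2, h3, h4⟩ := exists_prefix _ _ hlen hab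
  have hkey := key w v p x y s t h1 h2 h3
  rw [hg, hh, hkey]
  have hlenw : (p ++ x :: s).length = n := by rw [← h1, ← norm_def, hw]
  have hlenv : (p ++ y :: t).length = n := by rw [← h2, ← norm_def, hv]
  refine ⟨?_, ?_, ?_⟩
  · rw [List.append_assoc, List.take_left' (by simpa using hlenw), h1]
  · have : (((p ++ x :: s).map linv ++ ((x :: s).map linv).reverse) ++
        ((y :: t) ++ (p ++ y :: t).reverse)).reverse =
        (p ++ y :: t) ++ ((y :: t).reverse ++
          (((x :: s).map linv) ++ ((p ++ x :: s).map linv).reverse)) := by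
      simp [List.reverse_append, List.append_assoc]
    rw [this, List.take_left' hlenv, h2]
  · rw [norm_def, hkey]
    have e1 : p.length + (s.length + 1) = n := by simpa using hlenw
    have e2 : p.length + (t.length + 1) = n := by simpa using hlenv
    simp only [List.length_append, List.length_map, List.length_reverse,
      List.length_cons]
    omega

end DDCAux

theorem stmt6 (α : Type*) [DecidableEq α] (d : ℕ) (hd : 0 < d) (hd4 : 4 ∣ d) :
    IsDDC {g : FreeGroup α | ∃ w : FreeGroup α, w.norm = d / 4 ∧ g = w * w.rev} ∧
    ∀ g ∈ {g : FreeGroup α | ∃ w : FreeGroup α, w.norm = d / 4 ∧ g = w * w.rev},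
      ∀ h ∈ {g : FreeGroup α | ∃ w : FreeGroup α, w.norm = d / 4 ∧ g = w * w.rev},
        (g⁻¹ * h).norm ≤ d := by
  set n := d / 4 with hn
  have hd' : 4 * n = d := Nat.mul_div_cancel' hd4
  constructor
  · rintro g ⟨w, hw, hgw⟩ h ⟨v, hv, hhv⟩ g' ⟨w', hw', hgw'⟩ h' ⟨v', hv', hhv'⟩
      hgh hgh' heq
    obtain ⟨r1, r2, -⟩ := DDCAux.recover n g h w v hw hv hgw hhv hgh
    obtain ⟨r1', r2', -⟩ := DDCAux.recover n g' h' w' v' hw' hv' hgw' hhv' hgh'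
    rw [heq] at r1 r2
    have hww : w = w' := by
      apply FreeGroup.toWord_injective
      have : w.toWord.map DDCAux.linv = w'.toWord.map DDCAux.linv := by
        rw [← r1, ← r1']
      exact (List.map_injective_iff.mpr DDCAux.linv_invol.injective) this
    have hvv : v = v' := FreeGroup.toWord_injective (by rw [← r2, ← r2'])
    exact ⟨by rw [hgw, hgw', hww], by rw [hhv, hhv', hvv]⟩
  · rintro g ⟨w, hw, hgw⟩ h ⟨v, hv, hhv⟩
    by_cases hgh : g = h
    · subst hgh
      rw [FreeGroup.norm_eq_zero.mpr (by group : g⁻¹ * g = 1)]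
      exact Nat.zero_le d
    · obtain ⟨-, -, r3⟩ := DDCAux.recover n g h w v hw hv hgw hhv hgh
      omega
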